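/- Let q be a prime power of characteristic p, let d > 1 divide q − 1, let ω be a primitive root of F_q, and let o be a positive integer. Define f : F_q → F_q by f(0)=0, f(x) = ωx if x ∉ C_{d−1} ∪ {0}, and f(x) = ω^o x if x ∈ C_{d−1}, where C_{d−1} = ω^{d−1}·{x^d : x ∈ F_q^*}. If ω^o ≠ ω, then f is not an additive map (i.e., not an endomorphism of the additive group of F_q). -/

import Mathlib

/-- With `d > 1` dividing `q - 1`, `ω` a primitive root of `F_q` and `o` positive, the
first-order cyclotomic map `f` (with `f 0 = 0`, `f x = ω x` off `C_{d-1}`, and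
`f x = ω^o x` on `C_{d-1}`) is not additive, provided `ω^o ≠ ω`. -/
theorem stmt10 {F : Type*} [Field F] [Fintype F] [DecidableEq F]
    (p : ℕ) [CharP F p]
    (d : ℕ) (hd : 1 < d) [NeZero d] (hdvd : d ∣ Fintype.card F - 1)
    (ω : Fˣ) (hω : ∀ x : Fˣ, x ∈ Subgroup.zpowers ω)
    (o : ℕ) (ho : 0 < o)
    (f : F → F) (hf0 : f 0 = 0)
    (hf1 : ∀ e : ℤ, (e : ZMod d) ≠ ((d - 1 : ℕ) : ZMod d) →
      f ((ω ^ e : Fˣ) : F) = (ω : F) * ((ω ^ e : Fˣ) : F))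
    (hf2 : ∀ e : ℤ, (e : ZMod d) = ((d - 1 : ℕ) : ZMod d) →
      f ((ω ^ e : Fˣ) : F) = ((ω ^ o : Fˣ) : F) * ((ω ^ e : Fˣ) : F))
    (hoo : ω ^ o ≠ ω) :
    ¬ (∀ x y : F, f (x + y) = f x + f y) := by
  intro hadd
  classical
  set q := Fintype.card F with hq
  have hq1 : 1 ≤ q := Fintype.card_pos
  have hcardu : Fintype.card Fˣ = q - 1 := by
    rw [hq, ← Nat.card_eq_fintype_card, ← Nat.card_eq_fintype_card]
    exact Nat.card_units F
  have hord : orderOf ω = q - 1 := by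
    rw [orderOf_eq_card_of_forall_mem_zpowers hω, Nat.card_eq_fintype_card, hcardu]
  -- the residue class cast fact
  have hres : (((d : ℤ) - 1 : ℤ) : ZMod d) = ((d - 1 : ℕ) : ZMod d) := by
    push_cast [Nat.cast_sub hd.le]
    ring
  -- the subgroup of d-th powers
  set H : Subgroup Fˣ := Subgroup.zpowers (ω ^ d) with hH
  have hHne : H ≠ ⊤ := by
    intro htop
    have hmem : ω ∈ H := htop ▸ Subgroup.mem_top ω
    obtain ⟨k, hk⟩ := Subgroup.mem_zpowers_iff.mp hmem
    have h1 : ω ^ ((d : ℤ) * k - 1) = 1 := by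
      rw [zpow_sub, zpow_one, zpow_mul]
      norm_cast
      rw [hk, mul_inv_cancel]
    have h2 : ((q - 1 : ℕ) : ℤ) ∣ (d : ℤ) * k - 1 := by
      rw [← hord]
      exact_mod_cast orderOf_dvd_iff_zpow_eq_one.mpr h1
    have h3 : (d : ℤ) ∣ (d : ℤ) * k - 1 :=
      dvd_trans (by exact_mod_cast hdvd) h2
    have h4 : (d : ℤ) ∣ 1 := (dvd_sub_right ⟨k, rfl⟩).mp h3
    have := Int.le_of_dvd one_pos h4
    omega
  have hidx1 : H.index ≠ 1 := by simpa [Subgroup.index_eq_one] using hHne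
  have hidx0 : H.index ≠ 0 := Subgroup.index_ne_zero_of_finite
  have hHmul : Nat.card H * H.index = q - 1 := by
    rw [H.card_mul_index, Nat.card_eq_fintype_card, hcardu]
  have hHcard : 2 * Nat.card H ≤ q - 1 := by
    calc 2 * Nat.card H ≤ Nat.card H * H.index := by
          rw [mul_comm]; exact Nat.mul_le_mul_left _ (by omega)
      _ = q - 1 := hHmul
  -- the coset C_{d-1} inside F
  set C : Set F := Units.val '' ((fun u : Fˣ => ω ^ ((d : ℤ) - 1) * u) '' (H : Set Fˣ)) with hC
  have hCcard : C.ncard = Nat.card H := by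
    rw [hC, Set.ncard_image_of_injective _ (fun _ _ => Units.ext),
      Set.ncard_image_of_injective _ (mul_right_injective _)]
    rw [← Nat.card_coe_set_eq]
    exact Nat.card_congr (Equiv.setCongr rfl)
  -- the additive hom g
  set g : F →+ F := AddMonoidHom.mk' (fun x => f x - (ω : F) * x)
    (fun x y => by rw [hadd]; ring) with hg
  -- kernel contains the complement of C
  have hker : ∀ x : F, x ∉ C → x ∈ g.ker := by
    intro x hx
    rw [AddMonoidHom.mem_ker]
    by_cases hx0 : x = 0
    · simp [hg, hx0, hf0]
    · obtain ⟨e, he⟩ := Subgroup.mem_zpowers_iff.mp (hω (Units.mk0 x hx0))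
      have hxe : ((ω ^ e : Fˣ) : F) = x := by rw [he]; rfl
      by_cases hcase : (e : ZMod d) = ((d - 1 : ℕ) : ZMod d)
      · exfalso
        apply hx
        have : ((d : ℤ)) ∣ e - ((d : ℤ) - 1) := by
          have : ((e - ((d : ℤ) - 1) : ℤ) : ZMod d) = 0 := by
            push_cast
            rw [hcase, ← hres]
            push_cast
            ring
          exact_mod_cast (ZMod.intCast_zmod_eq_zero_iff_dvd _ d).mp this
        obtain ⟨k, hk⟩ := this
        refine ⟨ω ^ e, ⟨(ω ^ d) ^ k, Subgroup.zpow_mem H (Subgroup.mem_zpowers _) k, ?_⟩, hxe⟩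
        have : e = ((d : ℤ) - 1) + (d : ℤ) * k := by omega
        rw [this, zpow_add, ← zpow_natCast ω d, ← zpow_mul]
      · have := hf1 e hcase
        rw [hxe] at this
        simp [hg, this]
  -- hence the kernel has more than half the elements
  have hsub : Cᶜ ⊆ (g.ker : Set F) := fun x hx => hker x hx
  have hcompl : C.ncard + Cᶜ.ncard = q := by
    rw [Set.ncard_add_ncard_compl, Nat.card_eq_fintype_card]
  have hle : Cᶜ.ncard ≤ Nat.card g.ker := by
    have h := Set.ncard_le_ncard hsub (Set.toFinite _)
    have e1 : ((g.ker : Set F)).ncard = Nat.card g.ker := by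
      rw [← Nat.card_coe_set_eq]
      exact Nat.card_congr (Equiv.setCongr rfl)
    rw [e1] at h
    exact h
  -- kernel must be everything
  have hkertop : g.ker = ⊤ := by
    by_contra hne
    have hi1 : g.ker.index ≠ 1 := by
      simpa [AddSubgroup.index_eq_one] using hne
    have hi0 : g.ker.index ≠ 0 := AddSubgroup.index_ne_zero_of_finite
    have hmul : Nat.card g.ker * g.ker.index = q := by
      rw [g.ker.card_mul_index, Nat.card_eq_fintype_card]
    have : 2 * Nat.card g.ker ≤ q := by
      calc 2 * Nat.card g.ker ≤ Nat.card g.ker * g.ker.index := by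
            rw [mul_comm]; exact Nat.mul_le_mul_left _ (by omega)
        _ = q := hmul
    omega
  -- final contradiction at x = ω^(d-1)
  have hx : f ((ω ^ ((d : ℤ) - 1) : Fˣ) : F) = (ω : F) * ((ω ^ ((d : ℤ) - 1) : Fˣ) : F) := by
    have : ((ω ^ ((d : ℤ) - 1) : Fˣ) : F) ∈ g.ker := hkertop ▸ AddSubgroup.mem_top _
    rw [AddMonoidHom.mem_ker] at this
    simp only [hg, AddMonoidHom.mk'_apply] at this
    exact sub_eq_zero.mp this
  have hx2 := hf2 ((d : ℤ) - 1) hres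
  rw [hx] at hx2
  have hne0 : ((ω ^ ((d : ℤ) - 1) : Fˣ) : F) ≠ 0 := Units.ne_zero _
  have : (ω : F) = ((ω ^ o : Fˣ) : F) := mul_right_cancel₀ hne0 hx2
  exact hoo (Units.ext this.symm)
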